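/- (Property 2) Fix 0 ≤ s ≤ d ≤ n−1 and let ⁰R^{s,d} be the n×n matrix whose (i,j) entry equals r_{i,j} if s ≤ i ≤ d and s ≤ j ≤ d, and 0 otherwise. Then for all s ≤ k < l ≤ d, the recursion entities of ⁰R^{s,d} coincide with those of R: p_{k,l}(⁰R^{s,d}) = p_{k,l}(R), q_{k,l}(⁰R^{s,d}) = q_{k,l}(R), a_{k,l}(⁰R^{s,d}) = a_{k,l}(R), a'_{k,l}(⁰R^{s,d}) = a'_{k,l}(R), v_{k,l}(⁰R^{s,d}) = v_{k,l}(R), and v'_{k,l}(⁰R^{s,d}) = v'_{k,l}(R). -/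
import Mathlib


open Matrix
open scoped ComplexOrder

noncomputable section

/-- The `k`-th standard basis vector of `ℂⁿ` (zero if `k ≥ n`). -/
def eVec (n : ℕ) (k : ℕ) : Fin n → ℂ := fun j => if (j : ℕ) = k then 1 else 0

/-- `vᵀ R w`. -/
def bform {n : ℕ} (R : Matrix (Fin n) (Fin n) ℂ) (v w : Fin n → ℂ) : ℂ :=
  v ⬝ᵥ R.mulVec w

/-- Joint recursion computing the pair `(p_{k,k+d}, q_{k,k+d})`. -/
def pqAux {n : ℕ} (R : Matrix (Fin n) (Fin n) ℂ) : ℕ → ℕ → (Fin n → ℂ) × (Fin n → ℂ)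
  | 0, k => (eVec n k, eVec n k)
  | d + 1, k =>
      let p := (pqAux R d k).1
      let q := (pqAux R d (k + 1)).2
      let l := k + d + 1
      let a := bform R p (eVec n l) / bform R q (eVec n l)
      let a' := bform R q (eVec n k) / bform R p (eVec n k)
      (p - a • q, q - a' • p)

/-- The orthogonal polynomial `p_{k,l}`. -/
def pVec {n : ℕ} (R : Matrix (Fin n) (Fin n) ℂ) (k l : ℕ) : Fin n → ℂ :=
  (pqAux R (l - k) k).1

/-- The orthogonal polynomial `q_{k,l}`. -/
def qVec {n : ℕ} (R : Matrix (Fin n) (Fin n) ℂ) (k l : ℕ) : Fin n → ℂ :=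
  (pqAux R (l - k) k).2

/-- The generalized reflection coefficient `a_{k,l}`. -/
def aCoef {n : ℕ} (R : Matrix (Fin n) (Fin n) ℂ) (k l : ℕ) : ℂ :=
  bform R (pVec R k (l - 1)) (eVec n l) / bform R (qVec R (k + 1) l) (eVec n l)

/-- The generalized reflection coefficient `a'_{k,l}`. -/
def aCoef' {n : ℕ} (R : Matrix (Fin n) (Fin n) ℂ) (k l : ℕ) : ℂ :=
  bform R (qVec R (k + 1) l) (eVec n k) / bform R (pVec R k (l - 1)) (eVec n k)

/-- `v_{k,l} = q_{k,l}ᵀ R e_l`. -/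
def vSc {n : ℕ} (R : Matrix (Fin n) (Fin n) ℂ) (k l : ℕ) : ℂ :=
  bform R (qVec R k l) (eVec n l)

/-- `v'_{k,l} = p_{k,l}ᵀ R e_k`. -/
def vSc' {n : ℕ} (R : Matrix (Fin n) (Fin n) ℂ) (k l : ℕ) : ℂ :=
  bform R (pVec R k l) (eVec n k)

lemma bform_congr_aux {n : ℕ} (R M : Matrix (Fin n) (Fin n) ℂ) (s d : ℕ)
    (hM : ∀ i j : Fin n, s ≤ (i:ℕ) → (i:ℕ) ≤ d → s ≤ (j:ℕ) → (j:ℕ) ≤ d → M i j = R i j)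
    (v w : Fin n → ℂ)
    (hv : ∀ i : Fin n, v i ≠ 0 → s ≤ (i:ℕ) ∧ (i:ℕ) ≤ d)
    (hw : ∀ j : Fin n, w j ≠ 0 → s ≤ (j:ℕ) ∧ (j:ℕ) ≤ d) :
    bform M v w = bform R v w := by
  unfold bform Matrix.mulVec dotProduct
  apply Finset.sum_congr rfl
  intro i _
  by_cases hvi : v i = 0
  · simp [hvi]
  · congr 1
    apply Finset.sum_congr rfl
    intro j _
    by_cases hwj : w j = 0
    · simp [hwj]
    · obtain ⟨h1, h2⟩ := hv i hvi
      obtain ⟨h3, h4⟩ := hw j hwj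
      simp only [hM i j h1 h2 h3 h4]

lemma pqAux_support {n : ℕ} (R : Matrix (Fin n) (Fin n) ℂ) (d : ℕ) :
    ∀ k (i : Fin n),
      ((pqAux R d k).1 i ≠ 0 → k ≤ (i:ℕ) ∧ (i:ℕ) ≤ k + d) ∧
      ((pqAux R d k).2 i ≠ 0 → k ≤ (i:ℕ) ∧ (i:ℕ) ≤ k + d) := by
  induction d with
  | zero =>
    intro k i
    simp only [pqAux, eVec]
    constructor <;>
    · intro h
      by_cases hik : (i:ℕ) = k
      · omega
      · simp [hik] at h
  | succ d ih =>
    intro k i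
    have hp := (ih k i).1
    have hq := (ih (k+1) i).2
    simp only [pqAux]
    constructor <;>
    · intro h
      simp only [Pi.sub_apply, Pi.smul_apply, smul_eq_mul] at h
      by_cases h1 : (pqAux R d k).1 i = 0
      · by_cases h2 : (pqAux R d (k+1)).2 i = 0
        · simp [h1, h2] at h
        · have := hq h2; omega
      · have := hp h1; omega

lemma bform_e_congr {n : ℕ} (R M : Matrix (Fin n) (Fin n) ℂ) (s d : ℕ)
    (hM : ∀ i j : Fin n, s ≤ (i:ℕ) → (i:ℕ) ≤ d → s ≤ (j:ℕ) → (j:ℕ) ≤ d → M i j = R i j)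
    (v : Fin n → ℂ) (m : ℕ)
    (hv : ∀ i : Fin n, v i ≠ 0 → s ≤ (i:ℕ) ∧ (i:ℕ) ≤ d)
    (hm1 : s ≤ m) (hm2 : m ≤ d) :
    bform M v (eVec n m) = bform R v (eVec n m) := by
  apply bform_congr_aux R M s d hM v _ hv
  intro j hj
  by_cases h : (j:ℕ) = m
  · omega
  · simp [eVec, h] at hj

lemma pqAux_congr {n : ℕ} (R M : Matrix (Fin n) (Fin n) ℂ) (s d : ℕ)
    (hM : ∀ i j : Fin n, s ≤ (i:ℕ) → (i:ℕ) ≤ d → s ≤ (j:ℕ) → (j:ℕ) ≤ d → M i j = R i j) :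
    ∀ e k, s ≤ k → k + e ≤ d → pqAux M e k = pqAux R e k := by
  intro e
  induction e with
  | zero => intro k _ _; rfl
  | succ e ih =>
    intro k hk hke
    have h1 : pqAux M e k = pqAux R e k := ih k hk (by omega)
    have h2 : pqAux M e (k+1) = pqAux R e (k+1) := ih (k+1) (by omega) (by omega)
    have hbp : ∀ m : ℕ, s ≤ m → m ≤ d →
        bform M (pqAux R e k).1 (eVec n m) = bform R (pqAux R e k).1 (eVec n m) := by
      intro m hm1 hm2
      apply bform_e_congr R M s d hM _ m _ hm1 hm2
      intro i hi
      have := (pqAux_support R e k i).1 hi; omega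
    have hbq : ∀ m : ℕ, s ≤ m → m ≤ d →
        bform M (pqAux R e (k+1)).2 (eVec n m) = bform R (pqAux R e (k+1)).2 (eVec n m) := by
      intro m hm1 hm2
      apply bform_e_congr R M s d hM _ m _ hm1 hm2
      intro i hi
      have := (pqAux_support R e (k+1) i).2 hi; omega
    simp only [pqAux, h1, h2]
    rw [hbp (k + e + 1) (by omega) (by omega), hbp k hk (by omega),
        hbq (k + e + 1) (by omega) (by omega), hbq k hk (by omega)]

/-- Property 2: the recursion entities of the bordered-by-zero submatrix `⁰R^{s,d}` coincide
with those of `R` for all `s ≤ k < l ≤ d`. -/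
theorem stmt10 (n : ℕ) (hn : 1 ≤ n) (R : Matrix (Fin n) (Fin n) ℂ) (hR : R.PosDef)
    (s d : ℕ) (hsd : s ≤ d) (hd : d ≤ n - 1) :
    let M : Matrix (Fin n) (Fin n) ℂ := Matrix.of fun i j =>
      if s ≤ (i : ℕ) ∧ (i : ℕ) ≤ d ∧ s ≤ (j : ℕ) ∧ (j : ℕ) ≤ d then R i j else 0
    ∀ k l : ℕ, s ≤ k → k < l → l ≤ d →
      pVec M k l = pVec R k l ∧ qVec M k l = qVec R k l ∧
      aCoef M k l = aCoef R k l ∧ aCoef' M k l = aCoef' R k l ∧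
      vSc M k l = vSc R k l ∧ vSc' M k l = vSc' R k l := by
  intro M k l hsk hkl hld
  have hM : ∀ i j : Fin n, s ≤ (i:ℕ) → (i:ℕ) ≤ d → s ≤ (j:ℕ) → (j:ℕ) ≤ d → M i j = R i j := by
    intro i j h1 h2 h3 h4
    show (if _ then _ else _) = _
    rw [if_pos ⟨h1, h2, h3, h4⟩]
  have hc := pqAux_congr R M s d hM
  have hpkl : pVec M k l = pVec R k l := by
    unfold pVec; rw [hc (l - k) k hsk (by omega)]
  have hqkl : qVec M k l = qVec R k l := by
    unfold qVec; rw [hc (l - k) k hsk (by omega)]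
  have hpkl1 : pVec M k (l - 1) = pVec R k (l - 1) := by
    unfold pVec; rw [hc (l - 1 - k) k hsk (by omega)]
  have hqk1l : qVec M (k + 1) l = qVec R (k + 1) l := by
    unfold qVec; rw [hc (l - (k + 1)) (k + 1) (by omega) (by omega)]
  have hbp1 : ∀ m : ℕ, s ≤ m → m ≤ d →
      bform M (pVec R k (l - 1)) (eVec n m) = bform R (pVec R k (l - 1)) (eVec n m) := by
    intro m hm1 hm2
    apply bform_e_congr R M s d hM _ m _ hm1 hm2
    intro i hi
    have := (pqAux_support R (l - 1 - k) k i).1 hi; omega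
  have hbq1 : ∀ m : ℕ, s ≤ m → m ≤ d →
      bform M (qVec R (k + 1) l) (eVec n m) = bform R (qVec R (k + 1) l) (eVec n m) := by
    intro m hm1 hm2
    apply bform_e_congr R M s d hM _ m _ hm1 hm2
    intro i hi
    have := (pqAux_support R (l - (k + 1)) (k + 1) i).2 hi; omega
  refine ⟨hpkl, hqkl, ?_, ?_, ?_, ?_⟩
  · unfold aCoef
    rw [hpkl1, hqk1l, hbp1 l (by omega) hld, hbq1 l (by omega) hld]
  · unfold aCoef'
    rw [hpkl1, hqk1l, hbp1 k hsk (by omega), hbq1 k hsk (by omega)]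
  · unfold vSc
    rw [hqkl]
    apply bform_e_congr R M s d hM _ l ?_ (by omega) hld
    intro i hi
    have := (pqAux_support R (l - k) k i).2 hi; omega
  · unfold vSc'
    rw [hpkl]
    apply bform_e_congr R M s d hM _ k ?_ hsk (by omega)
    intro i hi
    have := (pqAux_support R (l - k) k i).1 hi; omega
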